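/- The function f(x) = |cos(x)| is not positive semi-definite on ℝ: there exist n ∈ ℕ, points x₁,…,xₙ ∈ ℝ and complex weights w₁,…,wₙ such that ∑_{i,j} wᵢ w̄ⱼ |cos(xᵢ − xⱼ)| < 0. -/
import Mathlib

/-- The function `x ↦ |cos x|` is not positive semi-definite on ℝ: there exist
points `x₁,…,xₙ` and complex weights `w₁,…,wₙ` such that
`∑ᵢⱼ wᵢ w̄ⱼ |cos (xᵢ - xⱼ)| < 0`. -/
theorem abs_cos_not_posSemidef :
    ∃ (n : ℕ) (x : Fin n → ℝ) (w : Fin n → ℂ),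
      (∑ i, ∑ j, w i * (starRingEnd ℂ) (w j) *
          ((|Real.cos (x i - x j)| : ℝ) : ℂ)).re < 0 := by
  refine ⟨4, ![0, Real.pi/4, Real.pi/2, 3*Real.pi/4], ![1, -1, 1, -1], ?_⟩
  have h1 : Real.cos (Real.pi/4) = Real.sqrt 2 / 2 := Real.cos_pi_div_four
  have h2 : Real.cos (Real.pi/2) = 0 := Real.cos_pi_div_two
  have h3 : Real.cos (3*Real.pi/4) = -(Real.sqrt 2 / 2) := by
    have : (3:ℝ)*Real.pi/4 = Real.pi - Real.pi/4 := by ring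
    rw [this, Real.cos_pi_sub, h1]
  have hs : (0:ℝ) ≤ Real.sqrt 2 / 2 := by positivity
  simp only [Fin.sum_univ_four, Matrix.cons_val_zero, Matrix.cons_val_one, Matrix.head_cons,
    Matrix.cons_val_two, Matrix.tail_cons, Matrix.cons_val_three]
  have e1 : Real.pi/4 - 0 = Real.pi/4 := by ring
  have e2 : Real.pi/2 - 0 = Real.pi/2 := by ring
  have e3 : 3*Real.pi/4 - 0 = 3*Real.pi/4 := by ring
  have e4 : Real.pi/2 - Real.pi/4 = Real.pi/4 := by ring
  have e5 : 3*Real.pi/4 - Real.pi/4 = Real.pi/2 := by ring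
  have e6 : 3*Real.pi/4 - Real.pi/2 = Real.pi/4 := by ring
  have e1' : (0:ℝ) - Real.pi/4 = -(Real.pi/4) := by ring
  have e2' : (0:ℝ) - Real.pi/2 = -(Real.pi/2) := by ring
  have e3' : (0:ℝ) - 3*Real.pi/4 = -(3*Real.pi/4) := by ring
  have e4' : Real.pi/4 - Real.pi/2 = -(Real.pi/4) := by ring
  have e5' : Real.pi/4 - 3*Real.pi/4 = -(Real.pi/2) := by ring
  have e6' : Real.pi/2 - 3*Real.pi/4 = -(Real.pi/4) := by ring
  rw [e1, e2, e3, e4, e5, e6, e1', e2', e3', e4', e5', e6']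
  simp only [Real.cos_neg, h1, h2, h3, sub_self, Real.cos_zero, abs_neg,
    abs_of_nonneg hs, abs_zero, abs_one]
  have h2lt : (2:ℝ) < Real.sqrt 2 * 2 := by
    nlinarith [Real.sq_sqrt (by norm_num : (0:ℝ) ≤ 2), Real.sqrt_nonneg 2,
      Real.sqrt_lt_sqrt (by norm_num : (0:ℝ) ≤ 1) (by norm_num : (1:ℝ) < 2), Real.sqrt_one]
  simp [Complex.add_re, Complex.mul_re, Complex.ofReal_re, Complex.ofReal_im]
  nlinarith [h2lt]
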